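/- arXiv:math/0503122 — 3 statements merged into one kernel-verified Lean document; each statement's English description precedes it below -/
import Mathlib

section
/- For every β ∈ L, the evaluation map e_β : H_ℂ → L_ℂ defined by e_β(h) := h(β) satisfies e_β(W) ⊆ L^{1,0} and e_β(σ_H(W)) ⊆ L^{0,1}, where σ_H denotes the conjugation f ↦ σ∘f∘σ of End_ℂ(L_ℂ) restricted to H_ℂ; moreover e_β(id) = β, so e_β is nonzero whenever β ≠ 0. In particular, if H_ℂ = W ⊕ σ_H(W), then for β ≠ 0 the map e_β is a nonzero morphism of weight 1 Hodge structures from (H, W) to (L, L^{1,0}). -/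
set_option linter.unusedSectionVars false
open scoped TensorProduct

noncomputable section

variable (L : Type) [AddCommGroup L] [Module ℚ L] [FiniteDimensional ℚ L]

/-- The conjugate-linear involution of `L_ℂ = ℂ ⊗[ℚ] L` fixing `L`. -/
def sigmaL : ℂ ⊗[ℚ] L →ₗ[ℚ] ℂ ⊗[ℚ] L :=
  LinearMap.rTensor L (Complex.conjAe.toLinearMap.restrictScalars ℚ)

/-- The inclusion of `L` into `L_ℂ = ℂ ⊗[ℚ] L`. -/
def inclL : L →ₗ[ℚ] ℂ ⊗[ℚ] L := TensorProduct.mk ℚ ℂ L 1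

lemma sigmaL_smul (c : ℂ) (x : ℂ ⊗[ℚ] L) :
    sigmaL L (c • x) = (starRingEnd ℂ c) • sigmaL L x := by
  induction x using TensorProduct.induction_on with
  | zero => simp
  | tmul a b =>
      simp [sigmaL, TensorProduct.smul_tmul', smul_eq_mul, map_mul]
  | add x y hx hy => simp only [smul_add, map_add, hx, hy]

lemma sigmaL_sigmaL (x : ℂ ⊗[ℚ] L) : sigmaL L (sigmaL L x) = x := by
  induction x using TensorProduct.induction_on with
  | zero => simp
  | tmul a b => simp [sigmaL]
  | add x y hx hy => simp only [map_add, hx, hy]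

/-- The image `σ(S)` of a `ℂ`-subspace `S ⊆ L_ℂ` under the conjugation `σ`, again a
`ℂ`-subspace. -/
def conjSub (S : Submodule ℂ (ℂ ⊗[ℚ] L)) : Submodule ℂ (ℂ ⊗[ℚ] L) where
  carrier := sigmaL L '' S
  add_mem' := by
    rintro x y ⟨w, hw, rfl⟩ ⟨v, hv, rfl⟩
    exact ⟨w + v, S.add_mem hw hv, map_add _ _ _⟩
  zero_mem' := ⟨0, S.zero_mem, map_zero _⟩
  smul_mem' := by
    rintro c x ⟨w, hw, rfl⟩
    refine ⟨(starRingEnd ℂ c) • w, S.smul_mem _ hw, ?_⟩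
    rw [sigmaL_smul]
    simp

/-- The conjugation `f ↦ σ ∘ f ∘ σ` on `End_ℂ(L_ℂ)`. -/
def conjEnd (f : Module.End ℂ (ℂ ⊗[ℚ] L)) : Module.End ℂ (ℂ ⊗[ℚ] L) where
  toFun x := sigmaL L (f (sigmaL L x))
  map_add' x y := by simp only [map_add]
  map_smul' c x := by
    show sigmaL L (f (sigmaL L (c • x))) = c • sigmaL L (f (sigmaL L x))
    rw [sigmaL_smul, f.map_smul, sigmaL_smul]
    simp

/-- `End^{2,0} ⊆ End_ℂ(L_ℂ)`: the endomorphisms killing `L^{1,0}` and mapping `L^{0,1}`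
into `L^{1,0}`. -/
def End20 (L10 : Submodule ℂ (ℂ ⊗[ℚ] L)) : Submodule ℂ (Module.End ℂ (ℂ ⊗[ℚ] L)) where
  carrier := {f | (∀ x ∈ L10, f x = 0) ∧ ∀ x ∈ conjSub L L10, f x ∈ L10}
  add_mem' := fun hf hg =>
    ⟨fun x hx => by simp [LinearMap.add_apply, hf.1 x hx, hg.1 x hx],
     fun x hx => by simpa [LinearMap.add_apply] using L10.add_mem (hf.2 x hx) (hg.2 x hx)⟩
  zero_mem' := ⟨fun x _ => rfl, fun x _ => L10.zero_mem⟩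
  smul_mem' := fun c f hf =>
    ⟨fun x hx => by simp [LinearMap.smul_apply, hf.1 x hx],
     fun x hx => by simpa [LinearMap.smul_apply] using L10.smul_mem c (hf.2 x hx)⟩

/-- `End^{1,1} ⊆ End_ℂ(L_ℂ)`: the endomorphisms preserving `L^{1,0}` and `L^{0,1}`. -/
def End11 (L10 : Submodule ℂ (ℂ ⊗[ℚ] L)) : Submodule ℂ (Module.End ℂ (ℂ ⊗[ℚ] L)) where
  carrier := {f | (∀ x ∈ L10, f x ∈ L10) ∧ ∀ x ∈ conjSub L L10, f x ∈ conjSub L L10}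
  add_mem' := fun hf hg =>
    ⟨fun x hx => by simpa [LinearMap.add_apply] using L10.add_mem (hf.1 x hx) (hg.1 x hx),
     fun x hx => by
      simpa [LinearMap.add_apply] using (conjSub L L10).add_mem (hf.2 x hx) (hg.2 x hx)⟩
  zero_mem' := ⟨fun x _ => L10.zero_mem, fun x _ => (conjSub L L10).zero_mem⟩
  smul_mem' := fun c f hf =>
    ⟨fun x hx => by simpa [LinearMap.smul_apply] using L10.smul_mem c (hf.1 x hx),
     fun x hx => by
      simpa [LinearMap.smul_apply] using (conjSub L L10).smul_mem c (hf.2 x hx)⟩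

/-- `End^{0,2} ⊆ End_ℂ(L_ℂ)`: the endomorphisms killing `L^{0,1}` and mapping `L^{1,0}`
into `L^{0,1}`. -/
def End02 (L10 : Submodule ℂ (ℂ ⊗[ℚ] L)) : Submodule ℂ (Module.End ℂ (ℂ ⊗[ℚ] L)) where
  carrier := {f | (∀ x ∈ conjSub L L10, f x = 0) ∧ ∀ x ∈ L10, f x ∈ conjSub L L10}
  add_mem' := fun hf hg =>
    ⟨fun x hx => by simp [LinearMap.add_apply, hf.1 x hx, hg.1 x hx],
     fun x hx => by
      simpa [LinearMap.add_apply] using (conjSub L L10).add_mem (hf.2 x hx) (hg.2 x hx)⟩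
  zero_mem' := ⟨fun x _ => rfl, fun x _ => (conjSub L L10).zero_mem⟩
  smul_mem' := fun c f hf =>
    ⟨fun x hx => by simp [LinearMap.smul_apply, hf.1 x hx],
     fun x hx => by
      simpa [LinearMap.smul_apply] using (conjSub L L10).smul_mem c (hf.2 x hx)⟩

/-- The complexification `H_ℂ ⊆ End_ℂ(L_ℂ)` of a subalgebra `H ⊆ End_ℚ(L)`: the `ℂ`-linear
span of the base-changed endomorphisms `f ⊗ 1` for `f ∈ H`. -/
def complexSpan (HQ : Subalgebra ℚ (Module.End ℚ L)) :
    Submodule ℂ (Module.End ℂ (ℂ ⊗[ℚ] L)) :=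
  Submodule.span ℂ ((fun f : Module.End ℚ L => LinearMap.baseChange ℂ f) ''
    (HQ : Set (Module.End ℚ L)))


lemma End20_apply_mem_aux (L10 : Submodule ℂ (ℂ ⊗[ℚ] L))
    (hsup : L10 ⊔ conjSub L L10 = ⊤)
    {f : Module.End ℂ (ℂ ⊗[ℚ] L)} (hf : f ∈ End20 L L10) (x : ℂ ⊗[ℚ] L) :
    f x ∈ L10 := by
  have hx : x ∈ L10 ⊔ conjSub L L10 := by rw [hsup]; exact Submodule.mem_top
  obtain ⟨a, ha, b, hb, rfl⟩ := Submodule.mem_sup.mp hx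
  rw [map_add, hf.1 a ha, zero_add]
  exact hf.2 b hb

set_option synthInstance.maxHeartbeats 400000 in
lemma inclL_ne_zero_aux (β : L) (hβ : β ≠ 0) : inclL L β ≠ 0 := by
  show (1 : ℂ) ⊗ₜ[ℚ] β ≠ 0
  have hinj : Function.Injective (LinearMap.toSpanSingleton ℚ L β) := by
    intro a b hab
    have h : (a - b) • β = 0 := by
      simpa [sub_smul, sub_eq_zero] using hab
    rcases smul_eq_zero.mp h with h | h
    · exact sub_eq_zero.mp h
    · exact absurd h hβ
  have h2 := Module.Flat.lTensor_preserves_injective_linearMap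
    (M := ℂ) (LinearMap.toSpanSingleton ℚ L β) hinj
  intro h
  have h1 : (LinearMap.toSpanSingleton ℚ L β).lTensor ℂ ((1:ℂ) ⊗ₜ[ℚ] (1:ℚ)) = 0 := by
    simp [LinearMap.lTensor_tmul, h]
  have h3 : ((1:ℂ) ⊗ₜ[ℚ] (1:ℚ)) = (0 : ℂ ⊗[ℚ] ℚ) := h2 (by simpa using h1)
  have h4 := congrArg (fun x => (TensorProduct.rid ℚ ℂ) x) h3
  simp only [TensorProduct.rid_tmul, one_smul, map_zero] at h4
  exact one_ne_zero h4

/-- Let `L` carry a weight `1` Hodge structure `L_ℂ = L^{1,0} ⊕ L^{0,1}`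
(`L^{0,1} := σ(L^{1,0})`), let `H ⊆ End_ℚ(L)` be a unital `ℚ`-subalgebra which is a
sub-Hodge structure of `End(L)` for the induced weight `2` Hodge structure, and set
`W := H^{2,0}·H_ℂ` (with `H^{p,q} := H_ℂ ∩ End^{p,q}`). For every `β ∈ L`, the evaluation
map `e_β : H_ℂ → L_ℂ`, `h ↦ h(β)`, satisfies `e_β(W) ⊆ L^{1,0}` and
`e_β(σ_H(W)) ⊆ L^{0,1}` (where `σ_H(f) := σ ∘ f ∘ σ`); moreover `e_β(id) = β`, so `e_β` is
nonzero whenever `β ≠ 0`. In particular, if `H_ℂ = W ⊕ σ_H(W)`, then for `β ≠ 0` the map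
`e_β` is a nonzero morphism of weight `1` Hodge structures from `(H, W)` to `(L, L^{1,0})`. -/
theorem evaluation_morphism_of_hodge_structures
    (L10 : Submodule ℂ (ℂ ⊗[ℚ] L))
    (hdisj : L10 ⊓ conjSub L L10 = ⊥) (hsup : L10 ⊔ conjSub L L10 = ⊤)
    (HQ : Subalgebra ℚ (Module.End ℚ L))
    (hsub : (complexSpan L HQ ⊓ End20 L L10) ⊔ (complexSpan L HQ ⊓ End11 L L10) ⊔
      (complexSpan L HQ ⊓ End02 L L10) = complexSpan L HQ) :
    ∀ β : L,
      (∀ f ∈ (complexSpan L HQ ⊓ End20 L L10) * complexSpan L HQ,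
        f (inclL L β) ∈ L10) ∧
      (∀ f ∈ (complexSpan L HQ ⊓ End20 L L10) * complexSpan L HQ,
        conjEnd L f (inclL L β) ∈ conjSub L L10) ∧
      (1 : Module.End ℂ (ℂ ⊗[ℚ] L)) (inclL L β) = inclL L β ∧
      (β ≠ 0 → ∃ f ∈ complexSpan L HQ, f (inclL L β) ≠ 0) := by
  intro β
  have key : ∀ f ∈ (complexSpan L HQ ⊓ End20 L L10) * complexSpan L HQ,
      ∀ x : ℂ ⊗[ℚ] L, f x ∈ L10 := by
    intro f hf
    refine Submodule.mul_induction_on hf ?_ ?_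
    · intro g hg h _ x
      rw [Module.End.mul_apply]
      exact End20_apply_mem_aux L L10 hsup hg.2 (h x)
    · intro a b ha hb x
      rw [LinearMap.add_apply]
      exact L10.add_mem (ha x) (hb x)
  refine ⟨fun f hf => key f hf _, fun f hf => ?_, rfl, fun hβ => ?_⟩
  · exact ⟨f (sigmaL L (inclL L β)), key f hf _, rfl⟩
  · refine ⟨1, ?_, ?_⟩
    · apply Submodule.subset_span
      exact ⟨1, HQ.one_mem, LinearMap.baseChange_one ℚ L⟩
    · rw [Module.End.one_apply]
      exact inclL_ne_zero_aux L β hβ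
end
end

section
/- If every element a of the center of A satisfying t(a) = a is a real scalar multiple of the unit 1, then A is a simple ring: its only two-sided ideals are 0 and A. -/
/-- Let `A` be a finite-dimensional associative unital `ℝ`-algebra,
`t : A → A` an `ℝ`-linear map with `t(t(x)) = x` and `t(xy) = t(y)t(x)`, and `B` a symmetric
negative definite `ℝ`-bilinear form on `A` satisfying `B(x,y) = B(x·t(y), 1)`. If every
element `a` of the center of `A` with `t(a) = a` is a real scalar multiple of the unit, then
`A` is a simple ring: its only two-sided ideals (additive subgroups stable under left and
right multiplication) are `0` and `A`. -/
theorem simple_of_trivial_invariant_center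
    (A : Type) [Ring A] [Algebra ℝ A] [FiniteDimensional ℝ A]
    (t : A →ₗ[ℝ] A) (ht_invol : ∀ x : A, t (t x) = x)
    (ht_mul : ∀ x y : A, t (x * y) = t y * t x)
    (B : A →ₗ[ℝ] A →ₗ[ℝ] ℝ)
    (hB_symm : ∀ x y : A, B x y = B y x)
    (hB_neg : ∀ x : A, x ≠ 0 → B x x < 0)
    (hB_adj : ∀ x y : A, B x y = B (x * t y) 1)
    (hcenter : ∀ a : A, (∀ b : A, a * b = b * a) → t a = a → ∃ r : ℝ, a = r • (1 : A)) :
    ∀ I : AddSubgroup A, (∀ x ∈ I, ∀ a : A, a * x ∈ I ∧ x * a ∈ I) →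
      I = ⊥ ∨ I = ⊤ := by
  intro I hI
  -- trivial ring case
  by_cases h1 : (1 : A) = 0
  · left
    ext x
    simp only [AddSubgroup.mem_bot]
    constructor
    · intro _
      calc x = x * 1 := (mul_one x).symm
        _ = x * 0 := by rw [h1]
        _ = 0 := mul_zero x
    · rintro rfl; exact I.zero_mem
  have hnt : Nontrivial A := nontrivial_of_ne 1 0 h1
  -- right-adjunction identity: B (x * a) y = B x (y * t a)
  have hadj_r : ∀ x a y : A, B (x * a) y = B x (y * t a) := by
    intro x a y
    rw [hB_adj (x * a) y, hB_adj x (y * t a), ht_mul, ht_invol, mul_assoc]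
  -- I as an ℝ-submodule
  set W : Submodule ℝ A :=
    { carrier := I
      add_mem' := fun ha hb => I.add_mem ha hb
      zero_mem' := I.zero_mem
      smul_mem' := by
        intro r x hx
        have : r • x = (r • (1 : A)) * x := by rw [smul_mul_assoc, one_mul]
        rw [this]
        exact (hI x hx _).1 } with hW
  have hWmem : ∀ x : A, x ∈ W ↔ x ∈ I := fun _ => Iff.rfl
  -- orthogonal complement of W
  set J : Submodule ℝ A := LinearMap.BilinForm.orthogonal B W with hJ
  have hJmem : ∀ y : A, y ∈ J ↔ ∀ x ∈ W, B x y = 0 := fun y =>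
    LinearMap.BilinForm.mem_orthogonal_iff
  have hrefl : LinearMap.BilinForm.IsRefl B := fun x y h => by rw [hB_symm]; exact h
  have hnondeg : LinearMap.BilinForm.Nondegenerate B := by
    refine (LinearMap.IsRefl.nondegenerate_iff_separatingLeft hrefl).2 ?_
    intro x hx
    by_contra hx0
    have := hB_neg x hx0
    rw [hx x] at this
    exact lt_irrefl 0 this
  have hdisj : Disjoint W J := by
    rw [disjoint_iff, Submodule.eq_bot_iff]
    intro x hx
    rcases Submodule.mem_inf.1 hx with ⟨hx1, hx2⟩
    by_contra hx0
    have := hB_neg x hx0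
    have h0 : B x x = 0 := (hJmem x).1 hx2 x hx1
    rw [h0] at this
    exact lt_irrefl 0 this
  have hcompl : IsCompl W J :=
    (LinearMap.BilinForm.isCompl_orthogonal_iff_disjoint hrefl).2 hdisj
  -- J is a right ideal
  have hJr : ∀ y ∈ J, ∀ a : A, y * a ∈ J := by
    intro y hy a
    rw [hJmem]
    intro x hx
    have : B x (y * a) = B (x * t a) y := by
      rw [hadj_r x (t a) y, ht_invol]
    rw [this]
    exact (hJmem y).1 hy _ ((hI x hx (t a)).2)
  -- products J * W vanish
  have hJW : ∀ y ∈ J, ∀ x ∈ W, y * x = 0 := by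
    intro y hy x hx
    have hm : y * x ∈ W ⊓ J :=
      Submodule.mem_inf.2 ⟨(hI x hx y).1, hJr y hy x⟩
    rw [hdisj.eq_bot, Submodule.mem_bot] at hm
    exact hm
  -- decompose 1 = e + f
  have h1top : (1 : A) ∈ W ⊔ J := by rw [hcompl.sup_eq_top]; trivial
  rcases Submodule.mem_sup.1 h1top with ⟨e, he, f, hf, hef⟩
  -- e is a left unit of W
  have hleft : ∀ x ∈ W, e * x = x := by
    intro x hx
    have h0 : f * x = 0 := hJW f hf x hx
    have : (e + f) * x = x := by rw [hef, one_mul]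
    rw [add_mul, h0, add_zero] at this
    exact this
  -- W is t-stable
  have hWt : ∀ x ∈ W, t x ∈ W := by
    intro x hx
    have horth : t x ∈ LinearMap.BilinForm.orthogonal B J := by
      rw [LinearMap.BilinForm.mem_orthogonal_iff]
      intro y hy
      show B y (t x) = 0
      rw [hB_adj y (t x), ht_invol, hJW y hy x hx, map_zero, LinearMap.zero_apply]
    rwa [hJ, LinearMap.BilinForm.orthogonal_orthogonal hnondeg hrefl] at horth
  -- t e is a right unit of W
  have hright : ∀ x ∈ W, x * t e = x := by
    intro x hx
    have h2 : t (x * t e) = t x := by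
      rw [ht_mul, ht_invol]
      exact hleft (t x) (hWt x hx)
    have := congrArg t h2
    rwa [ht_invol, ht_invol] at this
  -- hence t e = e, and e is a two-sided unit of W
  have hte : t e = e := by
    have h3 : e * t e = t e := hleft (t e) (hWt e he)
    have h4 : e * t e = e := hright e he
    rw [← h3, h4]
  have hright' : ∀ x ∈ W, x * e = x := by
    intro x hx
    have := hright x hx
    rwa [hte] at this
  -- e is central
  have hcent : ∀ b : A, e * b = b * e := by
    intro b
    have h5 : e * (b * e) = b * e := hleft (b * e) (hI e he b).1
    have h6 : (e * b) * e = e * b := hright' (e * b) (hI e he b).2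
    rw [← mul_assoc] at h5
    rw [← h6, h5]
  rcases hcenter e hcent hte with ⟨r, hr⟩
  -- e is idempotent, so r = 0 or r = 1
  have hee : e * e = e := hright' e he
  have hrr : r * r = r := by
    have h2 : (r * r) • (1 : A) = r • (1 : A) := by
      calc (r * r) • (1 : A) = (r • (1 : A)) * (r • (1 : A)) := by
            rw [smul_mul_smul_comm, one_mul]
      _ = e * e := by rw [← hr]
      _ = e := hee
      _ = r • (1 : A) := hr
    have h3 : ((r * r - r) : ℝ) • (1 : A) = 0 := by
      rw [sub_smul, h2, sub_self]
    have h4 : algebraMap ℝ A (r * r - r) = 0 := by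
      rw [Algebra.algebraMap_eq_smul_one]; exact h3
    have h5 : r * r - r = 0 := (algebraMap ℝ A).injective (by rw [h4, map_zero])
    linarith
  have hr01 : r = 0 ∨ r = 1 := by
    have : r * (r - 1) = 0 := by ring_nf; linarith
    rcases mul_eq_zero.1 this with h | h
    · exact Or.inl h
    · right; linarith
  rcases hr01 with hr0 | hr1
  · -- r = 0 : e = 0, so I = ⊥
    left
    have he0 : e = 0 := by rw [hr, hr0, zero_smul]
    ext x
    simp only [AddSubgroup.mem_bot]
    constructor
    · intro hx
      have := hleft x hx
      rw [he0, zero_mul] at this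
      exact this.symm
    · rintro rfl; exact I.zero_mem
  · -- r = 1 : e = 1 ∈ I, so I = ⊤
    right
    have he1 : e = 1 := by rw [hr, hr1, one_smul]
    have h1I : (1 : A) ∈ I := he1 ▸ he
    ext x
    simp only [AddSubgroup.mem_top, iff_true]
    have := (hI 1 h1I x).1
    rwa [mul_one] at this
end

section
/- The center of the ℂ-algebra H_ℂ is contained in H^{1,1}; equivalently, the center K of H is a trivial sub-Hodge structure of H (its (2,0)- and (0,2)-parts vanish). -/
open scoped TensorProduct

noncomputable section

/-- Complex conjugation on `ℂ` as a `ℚ`-algebra homomorphism. -/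
def conjQAlg : ℂ →ₐ[ℚ] ℂ := (Complex.conjAe.restrictScalars ℚ).toAlgHom

variable (H : Type) [Ring H] [Algebra ℚ H] [FiniteDimensional ℚ H]

/-- The conjugate-linear involution of `H_ℂ = ℂ ⊗[ℚ] H` fixing `H`. -/
def sigmaC : ℂ ⊗[ℚ] H →ₗ[ℚ] ℂ ⊗[ℚ] H :=
  (Algebra.TensorProduct.map conjQAlg (AlgHom.id ℚ H)).toLinearMap

/-- The inclusion of `H` into `H_ℂ = ℂ ⊗[ℚ] H`. -/
def inclH : H →ₐ[ℚ] ℂ ⊗[ℚ] H := Algebra.TensorProduct.includeRight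

/-- The data of a polarized weight 2 Hodge structure on a finite-dimensional `ℚ`-algebra `H`,
compatible with the ring structure:
(i) a Hodge decomposition `H_ℂ = H^{2,0} ⊕ H^{1,1} ⊕ H^{0,2}` with `σ(H^{2,0}) = H^{0,2}`,
`σ(H^{1,1}) = H^{1,1}`;
(ii) a polarization: a symmetric `ℚ`-bilinear form `B` on `H` with `ℂ`-bilinear extension `BC`
to `H_ℂ`, whose associated Hermitian pairing `h(α,β) := BC α (σ β)` makes the Hodge pieces
pairwise orthogonal and is positive definite on `H^{2,0}`, `H^{0,2}` and negative definite on
`H^{1,1}`;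
(iii) the product is a morphism of Hodge structures of bidegree `(-1,-1)`:
`H^{p,q}·H^{p',q'} ⊆ H^{p+p'-1,q+q'-1}`;
(iv) an adjunction `t`: a `ℚ`-linear involution with `t(ab) = t(b)t(a)`,
`⟨ab,c⟩ = ⟨b, t(a)c⟩` and `⟨ab,c⟩ = ⟨a, c·t(b)⟩`. -/
structure HodgeAlgebraData where
  H20 : Submodule ℂ (ℂ ⊗[ℚ] H)
  H11 : Submodule ℂ (ℂ ⊗[ℚ] H)
  H02 : Submodule ℂ (ℂ ⊗[ℚ] H)
  sup_top : H20 ⊔ H11 ⊔ H02 = ⊤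
  disj1 : H20 ⊓ (H11 ⊔ H02) = ⊥
  disj2 : H11 ⊓ H02 = ⊥
  sigma_20 : ∀ x ∈ H20, sigmaC H x ∈ H02
  sigma_02 : ∀ x ∈ H02, sigmaC H x ∈ H20
  sigma_11 : ∀ x ∈ H11, sigmaC H x ∈ H11
  B : H →ₗ[ℚ] H →ₗ[ℚ] ℚ
  B_symm : ∀ a b : H, B a b = B b a
  BC : (ℂ ⊗[ℚ] H) →ₗ[ℂ] (ℂ ⊗[ℚ] H) →ₗ[ℂ] ℂ
  BC_extends : ∀ a b : H, BC (inclH H a) (inclH H b) = (B a b : ℂ)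
  BC_symm : ∀ x y, BC x y = BC y x
  BC_conj : ∀ x y, BC (sigmaC H x) (sigmaC H y) = starRingEnd ℂ (BC x y)
  orth_20_11 : ∀ x ∈ H20, ∀ y ∈ H11, BC x (sigmaC H y) = 0
  orth_20_02 : ∀ x ∈ H20, ∀ y ∈ H02, BC x (sigmaC H y) = 0
  orth_11_02 : ∀ x ∈ H11, ∀ y ∈ H02, BC x (sigmaC H y) = 0
  pos_20 : ∀ x ∈ H20, x ≠ 0 → 0 < (BC x (sigmaC H x)).re ∧ (BC x (sigmaC H x)).im = 0
  pos_02 : ∀ x ∈ H02, x ≠ 0 → 0 < (BC x (sigmaC H x)).re ∧ (BC x (sigmaC H x)).im = 0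
  neg_11 : ∀ x ∈ H11, x ≠ 0 → (BC x (sigmaC H x)).re < 0 ∧ (BC x (sigmaC H x)).im = 0
  mul_20_20 : ∀ x ∈ H20, ∀ y ∈ H20, x * y = 0
  mul_20_11 : ∀ x ∈ H20, ∀ y ∈ H11, x * y ∈ H20
  mul_11_20 : ∀ x ∈ H11, ∀ y ∈ H20, x * y ∈ H20
  mul_11_11 : ∀ x ∈ H11, ∀ y ∈ H11, x * y ∈ H11
  mul_20_02 : ∀ x ∈ H20, ∀ y ∈ H02, x * y ∈ H11
  mul_02_20 : ∀ x ∈ H02, ∀ y ∈ H20, x * y ∈ H11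
  mul_02_02 : ∀ x ∈ H02, ∀ y ∈ H02, x * y = 0
  mul_11_02 : ∀ x ∈ H11, ∀ y ∈ H02, x * y ∈ H02
  mul_02_11 : ∀ x ∈ H02, ∀ y ∈ H11, x * y ∈ H02
  t : H →ₗ[ℚ] H
  t_invol : ∀ a : H, t (t a) = a
  t_mul : ∀ a b : H, t (a * b) = t b * t a
  adj_left : ∀ a b c : H, B (a * b) c = B b (t a * c)
  adj_right : ∀ a b c : H, B (a * b) c = B a (c * t b)

variable {H}

/-- `W := H^{2,0}·H_ℂ`, the `ℂ`-linear span of all products `x·y` with `x ∈ H^{2,0}`,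
`y ∈ H_ℂ`. -/
def HodgeAlgebraData.W (D : HodgeAlgebraData H) : Submodule ℂ (ℂ ⊗[ℚ] H) := D.H20 * ⊤

/-- `σ(W)`, the image of `W` under the conjugation `σ`, as a `ℚ`-subspace of `H_ℂ`. -/
def HodgeAlgebraData.sigmaW (D : HodgeAlgebraData H) : Submodule ℚ (ℂ ⊗[ℚ] H) :=
  (D.W.restrictScalars ℚ).map (sigmaC H)

/-- The `ℂ`-linear extension of `t` to `H_ℂ`. -/
def HodgeAlgebraData.tC (D : HodgeAlgebraData H) : ℂ ⊗[ℚ] H →ₗ[ℂ] ℂ ⊗[ℚ] H :=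
  LinearMap.baseChange ℂ D.t

set_option linter.unusedSectionVars false

lemma sigmaC_tmul (c : ℂ) (a : H) :
    sigmaC H (c ⊗ₜ[ℚ] a) = (starRingEnd ℂ c) ⊗ₜ[ℚ] a := by
  simp [sigmaC, conjQAlg]

lemma sigmaC_mul (x y : ℂ ⊗[ℚ] H) :
    sigmaC H (x * y) = sigmaC H x * sigmaC H y := by
  exact map_mul (Algebra.TensorProduct.map conjQAlg (AlgHom.id ℚ H)) x y

lemma sigmaC_one : sigmaC H (1 : ℂ ⊗[ℚ] H) = 1 := by
  exact map_one (Algebra.TensorProduct.map conjQAlg (AlgHom.id ℚ H))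

lemma sigmaC_sigmaC (x : ℂ ⊗[ℚ] H) : sigmaC H (sigmaC H x) = x := by
  induction x using TensorProduct.induction_on with
  | zero => simp
  | tmul c a => simp [sigmaC_tmul]
  | add x y hx hy => simp [map_add, hx, hy]

namespace HodgeAlgebraData

variable (D : HodgeAlgebraData H)

lemma tC_tmul (c : ℂ) (a : H) : D.tC (c ⊗ₜ[ℚ] a) = c ⊗ₜ[ℚ] (D.t a) := by
  simp [tC]

lemma tC_tC (x : ℂ ⊗[ℚ] H) : D.tC (D.tC x) = x := by
  induction x using TensorProduct.induction_on with
  | zero => simp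
  | tmul c a => simp [D.tC_tmul, D.t_invol]
  | add x y hx hy => simp [map_add, hx, hy]

lemma tC_mul (x y : ℂ ⊗[ℚ] H) : D.tC (x * y) = D.tC y * D.tC x := by
  induction x using TensorProduct.induction_on with
  | zero => simp
  | tmul c a =>
    induction y using TensorProduct.induction_on with
    | zero => simp
    | tmul d b =>
      simp [Algebra.TensorProduct.tmul_mul_tmul, D.tC_tmul, D.t_mul, mul_comm c d]
    | add y1 y2 h1 h2 => simp [mul_add, map_add, h1, h2, add_mul]
  | add x1 x2 h1 h2 => simp [add_mul, map_add, mul_add, h1, h2]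

lemma tC_sigmaC (x : ℂ ⊗[ℚ] H) : D.tC (sigmaC H x) = sigmaC H (D.tC x) := by
  induction x using TensorProduct.induction_on with
  | zero => simp
  | tmul c a => simp [sigmaC_tmul, D.tC_tmul]
  | add x y hx hy => simp [map_add, hx, hy]

lemma tmul_eq_smul (c : ℂ) (a : H) :
    (c ⊗ₜ[ℚ] a : ℂ ⊗[ℚ] H) = c • (inclH H a) := by
  simp [inclH, TensorProduct.smul_tmul']

lemma BC_tmul (c d : ℂ) (a b : H) :
    D.BC (c ⊗ₜ[ℚ] a) (d ⊗ₜ[ℚ] b) = c * d * (D.B a b : ℂ) := by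
  rw [tmul_eq_smul, tmul_eq_smul]
  simp only [map_smul, LinearMap.smul_apply, D.BC_extends, smul_eq_mul]
  ring

lemma adjL (x y z : ℂ ⊗[ℚ] H) : D.BC (x * y) z = D.BC y (D.tC x * z) := by
  induction x using TensorProduct.induction_on with
  | zero => simp
  | add x1 x2 h1 h2 => simp [add_mul, map_add, LinearMap.add_apply, h1, h2]
  | tmul c a =>
    induction y using TensorProduct.induction_on with
    | zero => simp
    | add y1 y2 h1 h2 => simp [mul_add, add_mul, map_add, LinearMap.add_apply, h1, h2]
    | tmul d b =>
      induction z using TensorProduct.induction_on with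
      | zero => simp
      | add z1 z2 h1 h2 => rw [map_add, h1, h2, mul_add, map_add]
      | tmul e g =>
        rw [Algebra.TensorProduct.tmul_mul_tmul, D.tC_tmul,
          Algebra.TensorProduct.tmul_mul_tmul, D.BC_tmul, D.BC_tmul,
          D.adj_left a b g]
        ring

lemma adjR (x y z : ℂ ⊗[ℚ] H) : D.BC (x * y) z = D.BC x (z * D.tC y) := by
  induction x using TensorProduct.induction_on with
  | zero => simp
  | add x1 x2 h1 h2 => simp [add_mul, map_add, LinearMap.add_apply, h1, h2]
  | tmul c a =>
    induction y using TensorProduct.induction_on with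
    | zero => simp
    | add y1 y2 h1 h2 => simp [mul_add, add_mul, map_add, LinearMap.add_apply, h1, h2]
    | tmul d b =>
      induction z using TensorProduct.induction_on with
      | zero => simp
      | add z1 z2 h1 h2 => rw [map_add, h1, h2, add_mul, map_add]
      | tmul e g =>
        rw [Algebra.TensorProduct.tmul_mul_tmul, D.tC_tmul,
          Algebra.TensorProduct.tmul_mul_tmul, D.BC_tmul, D.BC_tmul,
          D.adj_right a b g]
        ring

lemma exists_decomp (x : ℂ ⊗[ℚ] H) :
    ∃ p ∈ D.H20, ∃ q ∈ D.H11, ∃ r ∈ D.H02, x = p + q + r := by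
  have hx : x ∈ D.H20 ⊔ D.H11 ⊔ D.H02 := D.sup_top ▸ Submodule.mem_top
  rw [Submodule.mem_sup] at hx
  obtain ⟨u, hu, r, hr, hx⟩ := hx
  rw [Submodule.mem_sup] at hu
  obtain ⟨p, hp, q, hq, hu⟩ := hu
  exact ⟨p, hp, q, hq, r, hr, by rw [← hx, ← hu]⟩

lemma decomp_unique {p q r p' q' r' : ℂ ⊗[ℚ] H}
    (hp : p ∈ D.H20) (hq : q ∈ D.H11) (hr : r ∈ D.H02)
    (hp' : p' ∈ D.H20) (hq' : q' ∈ D.H11) (hr' : r' ∈ D.H02)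
    (h : p + q + r = p' + q' + r') : p = p' ∧ q = q' ∧ r = r' := by
  have h0 : p + q + r - (p' + q' + r') = 0 := sub_eq_zero.mpr h
  have key : p - p' = q' - q + (r' - r) := by
    calc p - p' = (p + q + r - (p' + q' + r')) + (q' - q + (r' - r)) := by abel
    _ = q' - q + (r' - r) := by rw [h0]; abel
  have hmem : p - p' ∈ D.H20 ⊓ (D.H11 ⊔ D.H02) :=
    ⟨sub_mem hp hp', key ▸ add_mem
      (Submodule.mem_sup_left (sub_mem hq' hq))
      (Submodule.mem_sup_right (sub_mem hr' hr))⟩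
  rw [D.disj1, Submodule.mem_bot] at hmem
  have hpp : p = p' := sub_eq_zero.mp hmem
  have key2 : q - q' = r' - r := by
    calc q - q' = (p + q + r - (p' + q' + r')) + (r' - r) + (p' - p) := by abel
    _ = r' - r := by rw [h0, hpp]; abel
  have hmem2 : q - q' ∈ D.H11 ⊓ D.H02 :=
    ⟨sub_mem hq hq', key2 ▸ sub_mem hr' hr⟩
  rw [D.disj2, Submodule.mem_bot] at hmem2
  have hqq : q = q' := sub_eq_zero.mp hmem2
  refine ⟨hpp, hqq, ?_⟩
  have : r - r' = (p + q + r - (p' + q' + r')) + (p' - p) + (q' - q) := by abel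
  rw [h0, hpp, hqq] at this
  simp only [sub_self, zero_add, add_zero] at this
  exact sub_eq_zero.mp this

lemma one_mem_H11 : (1 : ℂ ⊗[ℚ] H) ∈ D.H11 := by
  obtain ⟨p, hp, q, hq, r, hr, h1⟩ := D.exists_decomp 1
  have key : ∀ x : ℂ ⊗[ℚ] H, q * x = x := by
    have k20 : ∀ u ∈ D.H20, q * u = u := by
      intro u hu
      have he : q * u + (r * u) + 0 = u + 0 + 0 := by
        have : (p + q + r) * u = u := by rw [← h1, one_mul]
        rw [add_mul, add_mul, D.mul_20_20 p hp u hu, zero_add] at this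
        rw [this, add_zero, add_zero]
      exact (D.decomp_unique (D.mul_11_20 q hq u hu) (D.mul_02_20 r hr u hu)
        (zero_mem _) hu (zero_mem _) (zero_mem _) he).1
    have k11 : ∀ u ∈ D.H11, q * u = u := by
      intro u hu
      have he : p * u + q * u + r * u = 0 + u + 0 := by
        have : (p + q + r) * u = u := by rw [← h1, one_mul]
        rw [add_mul, add_mul] at this
        rw [this, zero_add, add_zero]
      exact (D.decomp_unique (D.mul_20_11 p hp u hu) (D.mul_11_11 q hq u hu)
        (D.mul_02_11 r hr u hu) (zero_mem _) hu (zero_mem _) he).2.1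
    have k02 : ∀ u ∈ D.H02, q * u = u := by
      intro u hu
      have he : 0 + p * u + q * u = 0 + 0 + u := by
        have : (p + q + r) * u = u := by rw [← h1, one_mul]
        rw [add_mul, add_mul, D.mul_02_02 r hr u hu, add_zero] at this
        simp only [zero_add]; exact this
      exact (D.decomp_unique (zero_mem _) (D.mul_20_02 p hp u hu)
        (D.mul_11_02 q hq u hu) (zero_mem _) (zero_mem _) hu he).2.2
    intro x
    obtain ⟨u, hu, v, hv, w, hw, rfl⟩ := D.exists_decomp x
    rw [mul_add, mul_add, k20 u hu, k11 v hv, k02 w hw]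
  have := key 1
  rw [mul_one] at this
  rw [← this]; exact hq

lemma BC_sigma_swap (x y : ℂ ⊗[ℚ] H) :
    D.BC x (sigmaC H y) = starRingEnd ℂ (D.BC y (sigmaC H x)) := by
  calc D.BC x (sigmaC H y) = D.BC (sigmaC H y) x := D.BC_symm _ _
  _ = D.BC (sigmaC H y) (sigmaC H (sigmaC H x)) := by rw [sigmaC_sigmaC]
  _ = starRingEnd ℂ (D.BC y (sigmaC H x)) := D.BC_conj _ _

lemma orth_11_20 : ∀ x ∈ D.H11, ∀ y ∈ D.H20, D.BC x (sigmaC H y) = 0 := by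
  intro x hx y hy
  rw [D.BC_sigma_swap, D.orth_20_11 y hy x hx, map_zero]

lemma orth_02_20 : ∀ x ∈ D.H02, ∀ y ∈ D.H20, D.BC x (sigmaC H y) = 0 := by
  intro x hx y hy
  rw [D.BC_sigma_swap, D.orth_20_02 y hy x hx, map_zero]

lemma orth_02_11 : ∀ x ∈ D.H02, ∀ y ∈ D.H11, D.BC x (sigmaC H y) = 0 := by
  intro x hx y hy
  rw [D.BC_sigma_swap, D.orth_11_02 y hy x hx, map_zero]

lemma eq_zero_of_H20 {x : ℂ ⊗[ℚ] H} (hx : x ∈ D.H20)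
    (h : D.BC x (sigmaC H x) = 0) : x = 0 := by
  by_contra hne
  have := (D.pos_20 x hx hne).1
  rw [h] at this; simp at this

lemma eq_zero_of_H11 {x : ℂ ⊗[ℚ] H} (hx : x ∈ D.H11)
    (h : D.BC x (sigmaC H x) = 0) : x = 0 := by
  by_contra hne
  have := (D.neg_11 x hx hne).1
  rw [h] at this; simp at this

lemma tC_mem_H02 {b : ℂ ⊗[ℚ] H} (hb : b ∈ D.H02) : D.tC b ∈ D.H02 := by
  set p := sigmaC H b with hpdef
  have hp : p ∈ D.H20 := D.sigma_02 b hb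
  -- σ (tC b) = tC p
  have hsv : sigmaC H (D.tC b) = D.tC p := (D.tC_sigmaC b).symm
  -- key : ∀ y, BC (tC p) y = BC 1 (p * y)
  have key : ∀ y : ℂ ⊗[ℚ] H, D.BC (D.tC p) y = D.BC 1 (p * y) := by
    intro y
    have := D.adjL (D.tC p) 1 y
    rw [mul_one, D.tC_tC] at this
    exact this
  obtain ⟨v20, h20, v11, h11, v02, h02, hv⟩ := D.exists_decomp (D.tC b)
  have hBC1_20 : ∀ w ∈ D.H20, D.BC 1 w = 0 := by
    intro w hw
    rw [D.BC_symm, ← sigmaC_one (H := H)]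
    exact D.orth_20_11 w hw 1 D.one_mem_H11
  have hv20 : v20 = 0 := by
    apply D.eq_zero_of_H20 h20
    have h1 : D.BC v20 (sigmaC H (D.tC b)) = D.BC v20 (sigmaC H v20) := by
      rw [hv, map_add, map_add, map_add, map_add,
        D.orth_20_11 v20 h20 v11 h11, D.orth_20_02 v20 h20 v02 h02, add_zero, add_zero]
    have h2 : D.BC v20 (sigmaC H (D.tC b)) = 0 := by
      rw [hsv, D.BC_symm, key, D.mul_20_20 p hp v20 h20, map_zero]
    rw [← h1, h2]
  have hv11 : v11 = 0 := by
    apply D.eq_zero_of_H11 h11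
    have h1 : D.BC v11 (sigmaC H (D.tC b)) = D.BC v11 (sigmaC H v11) := by
      rw [hv, map_add, map_add, map_add, map_add,
        D.orth_11_20 v11 h11 v20 h20, D.orth_11_02 v11 h11 v02 h02, zero_add, add_zero]
    have h2 : D.BC v11 (sigmaC H (D.tC b)) = 0 := by
      rw [hsv, D.BC_symm, key]
      exact hBC1_20 _ (D.mul_20_11 p hp v11 h11)
    rw [← h1, h2]
  rw [hv, hv20, hv11, zero_add, zero_add]
  exact h02

lemma central_H20_eq_zero {a : ℂ ⊗[ℚ] H} (ha : a ∈ D.H20)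
    (hc : ∀ y : ℂ ⊗[ℚ] H, a * y = y * a) : a = 0 := by
  have hb : sigmaC H a ∈ D.H02 := D.sigma_20 a ha
  set b := sigmaC H a with hbdef
  have hs : D.tC b ∈ D.H02 := D.tC_mem_H02 hb
  set s := D.tC b with hsdef
  have ha2 : a * a = 0 := D.mul_20_20 a ha a ha
  have htCa2 : D.tC a * D.tC a = 0 := by
    rw [← D.tC_mul, ha2, map_zero]
  have hss : sigmaC H s = D.tC a := by
    rw [hsdef, ← D.tC_sigmaC, hbdef, sigmaC_sigmaC]
  have hc11 : a * s ∈ D.H11 := D.mul_20_02 a ha s hs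
  have hsc : sigmaC H (a * s) = b * D.tC a := by
    rw [sigmaC_mul, hss, hbdef]
  have htCa_c : ∀ y : ℂ ⊗[ℚ] H, D.tC a * y = y * D.tC a := by
    intro y
    calc D.tC a * y = D.tC a * D.tC (D.tC y) := by rw [D.tC_tC]
    _ = D.tC (D.tC y * a) := (D.tC_mul _ _).symm
    _ = D.tC (a * D.tC y) := by rw [hc (D.tC y)]
    _ = D.tC (D.tC y) * D.tC a := D.tC_mul _ _
    _ = y * D.tC a := by rw [D.tC_tC]
  have hczero : a * s = 0 := by
    apply D.eq_zero_of_H11 hc11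
    rw [D.adjL]
    have hz : D.tC a * sigmaC H (a * s) = 0 := by
      rw [hsc, htCa_c (b * D.tC a), mul_assoc, htCa2, mul_zero]
    rw [hz, map_zero]
  apply D.eq_zero_of_H20 ha
  have h1 : D.tC a * b = 0 := by
    calc D.tC a * b = sigmaC H s * sigmaC H a := by rw [hss, hbdef]
    _ = sigmaC H (s * a) := (sigmaC_mul _ _).symm
    _ = sigmaC H (a * s) := by rw [hc s]
    _ = 0 := by rw [hczero, map_zero]
  calc D.BC a (sigmaC H a) = D.BC (a * 1) b := by rw [mul_one, hbdef]
  _ = D.BC 1 (D.tC a * b) := D.adjL a 1 b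
  _ = 0 := by rw [h1, map_zero]

lemma comp_central {x p q r : ℂ ⊗[ℚ] H}
    (hp : p ∈ D.H20) (hq : q ∈ D.H11) (hr : r ∈ D.H02)
    (hx : x = p + q + r) (hcent : ∀ y : ℂ ⊗[ℚ] H, x * y = y * x) :
    (∀ y : ℂ ⊗[ℚ] H, p * y = y * p) ∧ (∀ y : ℂ ⊗[ℚ] H, r * y = y * r) := by
  have expand : ∀ y : ℂ ⊗[ℚ] H, p * y + q * y + r * y = y * p + y * q + y * r := by
    intro y
    have := hcent y
    rw [hx, add_mul, add_mul, mul_add, mul_add] at this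
    exact this
  have k20 : ∀ u ∈ D.H20, p * u = u * p ∧ r * u = u * r := by
    intro u hu
    have hpu := D.mul_20_20 p hp u hu
    have hup := D.mul_20_20 u hu p hp
    have he : q * u + (r * u) + 0 = u * q + (u * r) + 0 := by
      have := expand u
      rw [hpu, hup, zero_add, zero_add] at this
      rw [add_zero, add_zero]
      exact this
    have hu2 := D.decomp_unique (D.mul_11_20 q hq u hu) (D.mul_02_20 r hr u hu)
      (zero_mem _) (D.mul_20_11 u hu q hq) (D.mul_20_02 u hu r hr) (zero_mem _) he
    exact ⟨by rw [hpu, hup], hu2.2.1⟩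
  have k11 : ∀ u ∈ D.H11, p * u = u * p ∧ r * u = u * r := by
    intro u hu
    have hu2 := D.decomp_unique (D.mul_20_11 p hp u hu) (D.mul_11_11 q hq u hu)
      (D.mul_02_11 r hr u hu) (D.mul_11_20 u hu p hp) (D.mul_11_11 u hu q hq)
      (D.mul_11_02 u hu r hr) (expand u)
    exact ⟨hu2.1, hu2.2.2⟩
  have k02 : ∀ u ∈ D.H02, p * u = u * p ∧ r * u = u * r := by
    intro u hu
    have hru := D.mul_02_02 r hr u hu
    have hur := D.mul_02_02 u hu r hr
    have he : 0 + (p * u) + (q * u) = 0 + (u * p) + (u * q) := by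
      have := expand u
      rw [hru, hur, add_zero, add_zero] at this
      simp only [zero_add]; exact this
    have hu2 := D.decomp_unique (zero_mem _) (D.mul_20_02 p hp u hu)
      (D.mul_11_02 q hq u hu) (zero_mem _) (D.mul_02_20 u hu p hp)
      (D.mul_02_11 u hu q hq) he
    exact ⟨hu2.2.1, by rw [hru, hur]⟩
  constructor
  · intro y
    obtain ⟨u, hu, v, hv, w, hw, rfl⟩ := D.exists_decomp y
    rw [mul_add, mul_add, add_mul, add_mul, (k20 u hu).1, (k11 v hv).1, (k02 w hw).1]
  · intro y
    obtain ⟨u, hu, v, hv, w, hw, rfl⟩ := D.exists_decomp y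
    rw [mul_add, mul_add, add_mul, add_mul, (k20 u hu).2, (k11 v hv).2, (k02 w hw).2]

end HodgeAlgebraData

/-- The center of the `ℂ`-algebra `H_ℂ` is contained in `H^{1,1}`;
equivalently, the center `K` of `H` is a trivial sub-Hodge structure of `H` (its `(2,0)`-
and `(0,2)`-parts vanish). -/
theorem center_subset_H11 (D : HodgeAlgebraData H) :
    ∀ x : ℂ ⊗[ℚ] H, (∀ y : ℂ ⊗[ℚ] H, x * y = y * x) → x ∈ D.H11 := by
  intro x hx
  obtain ⟨p, hp, q, hq, r, hr, hdec⟩ := D.exists_decomp x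
  obtain ⟨hpc, hrc⟩ := D.comp_central hp hq hr hdec hx
  have hp0 : p = 0 := D.central_H20_eq_zero hp hpc
  have hsr_mem : sigmaC H r ∈ D.H20 := D.sigma_02 r hr
  have hsr_c : ∀ y : ℂ ⊗[ℚ] H, sigmaC H r * y = y * sigmaC H r := by
    intro y
    calc sigmaC H r * y = sigmaC H r * sigmaC H (sigmaC H y) := by rw [sigmaC_sigmaC]
    _ = sigmaC H (r * sigmaC H y) := (sigmaC_mul _ _).symm
    _ = sigmaC H (sigmaC H y * r) := by rw [hrc (sigmaC H y)]
    _ = sigmaC H (sigmaC H y) * sigmaC H r := sigmaC_mul _ _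
    _ = y * sigmaC H r := by rw [sigmaC_sigmaC]
  have hsr0 : sigmaC H r = 0 := D.central_H20_eq_zero hsr_mem hsr_c
  have hr0 : r = 0 := by
    rw [← sigmaC_sigmaC (x := r), hsr0, map_zero]
  rw [hdec, hp0, hr0, zero_add, add_zero]
  exact hq
end
end
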